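/- (Variable-topography Dirichlet-to-Neumann formula.) Let μ > 0, let Λ ⊂ ℝ² ∖ {0} be a finite set of nonzero wavevectors, let q̂₀ ∈ ℂ, and let q̂, X : Λ → ℂ. Define φ : ℝ² × ℝ → ℂ by φ(x, z) = q̂₀ + Σ_{k∈Λ} exp(i k·x)·[ q̂(k)·cosh(μ‖k‖(z+1))/cosh(μ‖k‖) + X(k)·sinh(μ‖k‖ z)/(‖k‖·cosh²(μ‖k‖)) ]. Then: (i) μ²·Δ_H φ + ∂²φ/∂z² = 0 on ℝ² × ℝ; (ii) φ(x, 0) = q̂₀ + Σ_{k∈Λ} q̂(k)·exp(i k·x) for all x ∈ ℝ²; and (iii) ∂φ/∂z(x, 0) = Σ_{k∈Λ} exp(i k·x)·[ q̂(k)·μ‖k‖·tanh(μ‖k‖) + μ·X(k)·sech²(μ‖k‖) ] for all x ∈ ℝ², where sech(t) = 1/cosh(t). -/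

import Mathlib

noncomputable section

/-- Euclidean dot product `k · x` on ℝ². -/
def dot2 (k x : ℝ × ℝ) : ℝ := k.1 * x.1 + k.2 * x.2

/-- Euclidean norm `‖k‖` on ℝ². -/
def enorm2 (k : ℝ × ℝ) : ℝ := Real.sqrt (k.1 ^ 2 + k.2 ^ 2)

lemma enorm2_pos {k : ℝ × ℝ} (hk : k ≠ 0) : 0 < enorm2 k := by
  apply Real.sqrt_pos.mpr
  have h : ¬(k.1 = 0 ∧ k.2 = 0) := by
    intro ⟨h1, h2⟩; exact hk (Prod.ext h1 h2)
  by_cases h1 : k.1 = 0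
  · have h2 : k.2 ≠ 0 := by tauto
    positivity
  · positivity

lemma sq_enorm2 (k : ℝ × ℝ) : enorm2 k ^ 2 = k.1 ^ 2 + k.2 ^ 2 := by
  rw [enorm2, Real.sq_sqrt (by positivity)]

/-- derivative of `t ↦ exp (I f t)` for a real differentiable `f`. -/
lemma hd_exp' {f : ℝ → ℝ} {f' : ℝ} {s : ℝ} (hf : HasDerivAt f f' s) :
    HasDerivAt (fun t : ℝ => Complex.exp (Complex.I * ((f t : ℝ) : ℂ)))
      (Complex.I * f' * Complex.exp (Complex.I * ((f s : ℝ) : ℂ))) s := by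
  have := ((hf.ofReal_comp).const_mul Complex.I).cexp
  simpa [mul_comm, mul_assoc, mul_left_comm] using this

lemma hd_cosh (c d : ℝ) (z : ℝ) :
    HasDerivAt (fun z : ℝ => ((Real.cosh (c * (z + 1)) / d : ℝ) : ℂ))
      ((Real.sinh (c * (z + 1)) * c / d : ℝ) : ℂ) z := by
  have h : HasDerivAt (fun z : ℝ => c * (z + 1)) c z := by
    simpa using ((hasDerivAt_id z).add_const 1).const_mul c
  exact ((h.cosh).div_const d).ofReal_comp

lemma hd_sinh0 (c d : ℝ) (z : ℝ) :
    HasDerivAt (fun z : ℝ => ((Real.sinh (c * z) / d : ℝ) : ℂ))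
      ((Real.cosh (c * z) * c / d : ℝ) : ℂ) z := by
  have h : HasDerivAt (fun z : ℝ => c * z) c z := by
    simpa using (hasDerivAt_id z).const_mul c
  exact ((h.sinh).div_const d).ofReal_comp

lemma hd_sinh1 (c d : ℝ) (z : ℝ) :
    HasDerivAt (fun z : ℝ => ((Real.sinh (c * (z + 1)) * c / d : ℝ) : ℂ))
      ((Real.cosh (c * (z + 1)) * c * c / d : ℝ) : ℂ) z := by
  have h : HasDerivAt (fun z : ℝ => c * (z + 1)) c z := by
    simpa using ((hasDerivAt_id z).add_const 1).const_mul c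
  have := ((h.sinh.mul_const c).div_const d).ofReal_comp
  simpa [mul_comm, mul_assoc, mul_left_comm] using this

lemma hd_cosh0 (c d : ℝ) (z : ℝ) :
    HasDerivAt (fun z : ℝ => ((Real.cosh (c * z) * c / d : ℝ) : ℂ))
      ((Real.sinh (c * z) * c * c / d : ℝ) : ℂ) z := by
  have h : HasDerivAt (fun z : ℝ => c * z) c z := by
    simpa using (hasDerivAt_id z).const_mul c
  have := ((h.cosh.mul_const c).div_const d).ofReal_comp
  simpa [mul_comm, mul_assoc, mul_left_comm] using this

/-- variable-topography Dirichlet-to-Neumann formula: for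
`φ(x,z) = q̂₀ + Σ_{k∈Λ} exp(i k·x)·[ q̂(k)·cosh(μ‖k‖(z+1))/cosh(μ‖k‖)
  + X(k)·sinh(μ‖k‖ z)/(‖k‖·cosh²(μ‖k‖)) ]`,
one has `μ²·Δ_H φ + ∂²φ/∂z² = 0` on ℝ² × ℝ, surface Dirichlet data
`φ(x, 0) = q̂₀ + Σ_{k∈Λ} q̂(k)·exp(i k·x)`, and surface Neumann data
`∂φ/∂z(x, 0) = Σ_{k∈Λ} exp(i k·x)·[ q̂(k)·μ‖k‖·tanh(μ‖k‖) + μ·X(k)·sech²(μ‖k‖) ]`,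
where `sech(t) = 1/cosh(t)`. -/
theorem stmt_8 (μ : ℝ) (hμ : 0 < μ) (Λ : Finset (ℝ × ℝ)) (hΛ : ∀ k ∈ Λ, k ≠ 0)
    (qhat₀ : ℂ) (qhat X : ℝ × ℝ → ℂ)
    (φ : ℝ × ℝ → ℝ → ℂ)
    (hφ : ∀ (x : ℝ × ℝ) (z : ℝ), φ x z =
      qhat₀ + ∑ k ∈ Λ, Complex.exp (Complex.I * (dot2 k x : ℂ)) *
        (qhat k * ((Real.cosh (μ * enorm2 k * (z + 1)) / Real.cosh (μ * enorm2 k) : ℝ) : ℂ) +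
          X k *
            ((Real.sinh (μ * enorm2 k * z) /
                (enorm2 k * Real.cosh (μ * enorm2 k) ^ 2) : ℝ) : ℂ))) :
    (∀ (x : ℝ × ℝ) (z : ℝ),
        (μ : ℂ) ^ 2 *
            (deriv (deriv (fun s : ℝ => φ (s, x.2) z)) x.1 +
              deriv (deriv (fun s : ℝ => φ (x.1, s) z)) x.2) +
          deriv (deriv (fun s : ℝ => φ x s)) z = 0) ∧
    (∀ x : ℝ × ℝ, φ x 0 =
      qhat₀ + ∑ k ∈ Λ, qhat k * Complex.exp (Complex.I * (dot2 k x : ℂ))) ∧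
    (∀ x : ℝ × ℝ, deriv (fun s : ℝ => φ x s) 0 =
      ∑ k ∈ Λ, Complex.exp (Complex.I * (dot2 k x : ℂ)) *
        (qhat k * ((μ * enorm2 k * Real.tanh (μ * enorm2 k) : ℝ) : ℂ) +
          ((μ : ℂ) * X k * ((1 / Real.cosh (μ * enorm2 k)) ^ 2 : ℝ)))) := by
  refine ⟨?_, ?_, ?_⟩
  · -- (i) the PDE
    intro x z
    set C : (ℝ × ℝ) → ℂ := fun k =>
      qhat k * ((Real.cosh (μ * enorm2 k * (z + 1)) / Real.cosh (μ * enorm2 k) : ℝ) : ℂ) +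
        X k * ((Real.sinh (μ * enorm2 k * z) /
            (enorm2 k * Real.cosh (μ * enorm2 k) ^ 2) : ℝ) : ℂ) with hC
    have hdot1 : ∀ (k : ℝ × ℝ) (s : ℝ), HasDerivAt (fun t : ℝ => dot2 k (t, x.2)) k.1 s := by
      intro k s
      simp only [dot2]
      simpa using (((hasDerivAt_id s).const_mul k.1).add_const (k.2 * x.2))
    have hdot2 : ∀ (k : ℝ × ℝ) (s : ℝ), HasDerivAt (fun t : ℝ => dot2 k (x.1, t)) k.2 s := by
      intro k s
      simp only [dot2]
      simpa using (((hasDerivAt_id s).const_mul k.2).const_add (k.1 * x.1))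
    -- first x₁-derivative
    have h1 : deriv (fun t : ℝ => φ (t, x.2) z) = fun s : ℝ =>
        ∑ k ∈ Λ, Complex.I * k.1 * Complex.exp (Complex.I * ((dot2 k (s, x.2) : ℝ) : ℂ)) * C k := by
      funext s
      have hfun : (fun t : ℝ => φ (t, x.2) z) = fun t : ℝ =>
          qhat₀ + ∑ k ∈ Λ, Complex.exp (Complex.I * ((dot2 k (t, x.2) : ℝ) : ℂ)) * C k := by
        funext t; rw [hφ]
      rw [hfun]
      exact ((HasDerivAt.fun_sum fun k _ =>
        (hd_exp' (hdot1 k s)).mul_const (C k)).const_add qhat₀).deriv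
    have h2 : deriv (deriv (fun t : ℝ => φ (t, x.2) z)) x.1 =
        ∑ k ∈ Λ, Complex.I * k.1 *
          (Complex.I * k.1 * Complex.exp (Complex.I * ((dot2 k (x.1, x.2) : ℝ) : ℂ))) * C k := by
      rw [h1]
      exact (HasDerivAt.fun_sum fun k _ =>
        ((hd_exp' (hdot1 k x.1)).const_mul (Complex.I * k.1)).mul_const (C k)).deriv
    -- first x₂-derivative
    have h1' : deriv (fun t : ℝ => φ (x.1, t) z) = fun s : ℝ =>
        ∑ k ∈ Λ, Complex.I * k.2 * Complex.exp (Complex.I * ((dot2 k (x.1, s) : ℝ) : ℂ)) * C k := by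
      funext s
      have hfun : (fun t : ℝ => φ (x.1, t) z) = fun t : ℝ =>
          qhat₀ + ∑ k ∈ Λ, Complex.exp (Complex.I * ((dot2 k (x.1, t) : ℝ) : ℂ)) * C k := by
        funext t; rw [hφ]
      rw [hfun]
      exact ((HasDerivAt.fun_sum fun k _ =>
        (hd_exp' (hdot2 k s)).mul_const (C k)).const_add qhat₀).deriv
    have h2' : deriv (deriv (fun t : ℝ => φ (x.1, t) z)) x.2 =
        ∑ k ∈ Λ, Complex.I * k.2 *
          (Complex.I * k.2 * Complex.exp (Complex.I * ((dot2 k (x.1, x.2) : ℝ) : ℂ))) * C k := by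
      rw [h1']
      exact (HasDerivAt.fun_sum fun k _ =>
        ((hd_exp' (hdot2 k x.2)).const_mul (Complex.I * k.2)).mul_const (C k)).deriv
    -- z-derivatives
    have hz1 : deriv (fun s : ℝ => φ x s) = fun t : ℝ =>
        ∑ k ∈ Λ, Complex.exp (Complex.I * ((dot2 k x : ℝ) : ℂ)) *
          (qhat k * ((Real.sinh (μ * enorm2 k * (t + 1)) * (μ * enorm2 k) /
              Real.cosh (μ * enorm2 k) : ℝ) : ℂ) +
           X k * ((Real.cosh (μ * enorm2 k * t) * (μ * enorm2 k) /
              (enorm2 k * Real.cosh (μ * enorm2 k) ^ 2) : ℝ) : ℂ)) := by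
      funext t
      have hfun : (fun s : ℝ => φ x s) = fun s : ℝ =>
          qhat₀ + ∑ k ∈ Λ, Complex.exp (Complex.I * ((dot2 k x : ℝ) : ℂ)) *
            (qhat k * ((Real.cosh (μ * enorm2 k * (s + 1)) / Real.cosh (μ * enorm2 k) : ℝ) : ℂ) +
              X k * ((Real.sinh (μ * enorm2 k * s) /
                  (enorm2 k * Real.cosh (μ * enorm2 k) ^ 2) : ℝ) : ℂ)) := by
        funext s; rw [hφ]
      rw [hfun]
      exact ((HasDerivAt.fun_sum fun k _ =>
        (((hd_cosh (μ * enorm2 k) (Real.cosh (μ * enorm2 k)) t).const_mul (qhat k)).add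
          ((hd_sinh0 (μ * enorm2 k) (enorm2 k * Real.cosh (μ * enorm2 k) ^ 2) t).const_mul
            (X k))).const_mul
          (Complex.exp (Complex.I * ((dot2 k x : ℝ) : ℂ)))).const_add qhat₀).deriv
    have h3 : deriv (deriv (fun s : ℝ => φ x s)) z =
        ∑ k ∈ Λ, Complex.exp (Complex.I * ((dot2 k x : ℝ) : ℂ)) *
          (qhat k * ((Real.cosh (μ * enorm2 k * (z + 1)) * (μ * enorm2 k) * (μ * enorm2 k) /
              Real.cosh (μ * enorm2 k) : ℝ) : ℂ) +
           X k * ((Real.sinh (μ * enorm2 k * z) * (μ * enorm2 k) * (μ * enorm2 k) /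
              (enorm2 k * Real.cosh (μ * enorm2 k) ^ 2) : ℝ) : ℂ)) := by
      rw [hz1]
      exact (HasDerivAt.fun_sum fun k _ =>
        (((hd_sinh1 (μ * enorm2 k) (Real.cosh (μ * enorm2 k)) z).const_mul (qhat k)).add
          ((hd_cosh0 (μ * enorm2 k) (enorm2 k * Real.cosh (μ * enorm2 k) ^ 2) z).const_mul
            (X k))).const_mul
          (Complex.exp (Complex.I * ((dot2 k x : ℝ) : ℂ)))).deriv
    rw [h2, h2', h3, ← Finset.sum_add_distrib, Finset.mul_sum, ← Finset.sum_add_distrib]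
    apply Finset.sum_eq_zero
    intro k hk
    have he2c : ((enorm2 k : ℝ) : ℂ) ^ 2 = (k.1 : ℂ) ^ 2 + (k.2 : ℂ) ^ 2 := by
      have := sq_enorm2 k
      push_cast [← this]
      norm_cast
    simp only [hC, dot2]
    have key : ∀ E q x A B ch e : ℂ,
        (μ : ℂ) ^ 2 * (Complex.I * k.1 * (Complex.I * k.1 * E) * (q * (A / ch) + x * (B / (e * ch ^ 2))) +
            Complex.I * k.2 * (Complex.I * k.2 * E) * (q * (A / ch) + x * (B / (e * ch ^ 2)))) +
          E * (q * (A * ((μ : ℂ) * e) * ((μ : ℂ) * e) / ch) +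
            x * (B * ((μ : ℂ) * e) * ((μ : ℂ) * e) / (e * ch ^ 2))) =
        E * ((μ : ℂ) ^ 2 * (Complex.I ^ 2 * ((k.1 : ℂ) ^ 2 + (k.2 : ℂ) ^ 2) + e ^ 2) *
          (q * (A / ch) + x * (B / (e * ch ^ 2)))) := by
      intro E q x A B ch e; ring
    push_cast
    rw [key, Complex.I_sq, ← he2c]
    ring
  · -- (ii) Dirichlet data
    intro x
    rw [hφ x 0]
    congr 1
    refine Finset.sum_congr rfl fun k hk => ?_
    have hch : Real.cosh (μ * enorm2 k) ≠ 0 := (Real.cosh_pos _).ne'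
    rw [mul_zero, Real.sinh_zero, zero_div, show μ * enorm2 k * (0 + 1) = μ * enorm2 k by ring,
      div_self hch]
    push_cast
    ring
  · -- (iii) Neumann data
    intro x
    have hz1 : HasDerivAt (fun s : ℝ => φ x s)
        (∑ k ∈ Λ, Complex.exp (Complex.I * ((dot2 k x : ℝ) : ℂ)) *
          (qhat k * ((Real.sinh (μ * enorm2 k * (0 + 1)) * (μ * enorm2 k) /
              Real.cosh (μ * enorm2 k) : ℝ) : ℂ) +
           X k * ((Real.cosh (μ * enorm2 k * 0) * (μ * enorm2 k) /
              (enorm2 k * Real.cosh (μ * enorm2 k) ^ 2) : ℝ) : ℂ))) 0 := by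
      have hfun : (fun s : ℝ => φ x s) = fun s : ℝ =>
          qhat₀ + ∑ k ∈ Λ, Complex.exp (Complex.I * ((dot2 k x : ℝ) : ℂ)) *
            (qhat k * ((Real.cosh (μ * enorm2 k * (s + 1)) / Real.cosh (μ * enorm2 k) : ℝ) : ℂ) +
              X k * ((Real.sinh (μ * enorm2 k * s) /
                  (enorm2 k * Real.cosh (μ * enorm2 k) ^ 2) : ℝ) : ℂ)) := by
        funext s; rw [hφ]
      rw [hfun]
      exact (HasDerivAt.fun_sum fun k _ =>
        (((hd_cosh (μ * enorm2 k) (Real.cosh (μ * enorm2 k)) 0).const_mul (qhat k)).add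
          ((hd_sinh0 (μ * enorm2 k) (enorm2 k * Real.cosh (μ * enorm2 k) ^ 2) 0).const_mul
            (X k))).const_mul
          (Complex.exp (Complex.I * ((dot2 k x : ℝ) : ℂ)))).const_add qhat₀
    rw [hz1.deriv]
    refine Finset.sum_congr rfl fun k hk => ?_
    have he : enorm2 k ≠ 0 := (enorm2_pos (hΛ k hk)).ne'
    have hch : Real.cosh (μ * enorm2 k) ≠ 0 := (Real.cosh_pos _).ne'
    rw [mul_zero, Real.cosh_zero, show μ * enorm2 k * (0 + 1) = μ * enorm2 k by ring,
      Real.tanh_eq_sinh_div_cosh]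
    have hec : ((enorm2 k : ℝ) : ℂ) ≠ 0 := by exact_mod_cast he
    have hchc : ((Real.cosh (μ * enorm2 k) : ℝ) : ℂ) ≠ 0 := by exact_mod_cast hch
    push_cast at hec hchc ⊢
    field_simp
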